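/- Let Γ be a 5-colored graph of order 2p. Define the subdegree ρ_G(Γ) = |ℛ_4(Γ)| + 5p − |ℛ_2(Γ)|, where ℛ_4(Γ) is the set of 4-residues and ℛ_2(Γ) is the set of bigons. Then the sum over the five colors c of the total G-degrees of the connected components of Γ restricted to the other four colors equals 3ρ_G(Γ). -/

import Mathlib

/-- An `n`-colored graph: a finite connected `n`-regular multigraph without loops,
equipped with a proper edge-coloring by the `n` colors `Fin n`. -/
structure ColoredGraph (n : ℕ) where
  V : Type
  E : Type
  [fintypeV : Fintype V]
  [fintypeE : Fintype E]
  ends : E → Sym2 V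
  no_loops : ∀ e : E, ¬ (ends e).IsDiag
  color : E → Fin n
  proper : ∀ e₁ e₂ : E, e₁ ≠ e₂ → color e₁ = color e₂ →
      ∀ v : V, ¬ (v ∈ ends e₁ ∧ v ∈ ends e₂)
  regular : ∀ v : V, Set.ncard {e : E | v ∈ ends e} = n
  connected : ∀ v w : V,
      Relation.ReflTransGen (fun a b => ∃ e : E, a ∈ ends e ∧ b ∈ ends e) v w

attribute [instance] ColoredGraph.fintypeV ColoredGraph.fintypeE

namespace ColoredGraph

variable {n : ℕ} (G : ColoredGraph n)

/-- Reachability using only edges whose color lies in `Δ`. -/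
def Reach (Δ : Set (Fin n)) (v w : G.V) : Prop :=
  Relation.EqvGen (fun a b => ∃ e : G.E, G.color e ∈ Δ ∧ a ∈ G.ends e ∧ b ∈ G.ends e) v w

/-- The `Δ`-residue containing `v`. -/
def residue (Δ : Set (Fin n)) (v : G.V) : Set G.V := {u | G.Reach Δ v u}

def residueSetoid (Δ : Set (Fin n)) : Setoid G.V :=
  ⟨G.Reach Δ, Relation.EqvGen.is_equivalence _⟩

/-- number of `Δ`-residues, i.e. connected components of the spanning subgraph `Γ_Δ`. -/
noncomputable def numResidues (Δ : Set (Fin n)) : ℕ :=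
  Nat.card (Quotient (G.residueSetoid Δ))

end ColoredGraph

namespace ColoredGraph

variable (G : ColoredGraph 5)

/-- the set of Δ-residues (connected components of Γ_Δ), as sets of vertices. -/
def componentsOf (Δ : Set (Fin 5)) : Set (Set G.V) :=
  {C | ∃ v : G.V, C = G.residue Δ v}

/-- number of {i,j}-bigons contained in the vertex set `C`. -/
noncomputable def gIn (i j : Fin 5) (C : Set G.V) : ℕ :=
  {C' : Set G.V | ∃ w ∈ C, C' = G.residue {i, j} w}.ncard

/-- Euler characteristic of the regular embedding surface of the 4-colored
component `C` of `Γ_ĉ` with respect to the cyclic permutation ε of its four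
colors: Σ_j g_{ε_j,ε_{j+1}}(C) − 2q, where 2q = |C|. -/
noncomputable def chiEps (ε : ZMod 4 → Fin 5) (C : Set G.V) : ℚ :=
  (∑ j : ZMod 4, (G.gIn (ε j) (ε (j + 1)) C : ℚ)) - (C.ncard : ℚ)

/-- cyclic orderings of the four colors different from `c`; each of the three
cyclic permutations up to inversion is represented by 8 such maps. -/
def CyclAvoiding (c : Fin 5) : Type :=
  {ε : ZMod 4 → Fin 5 // Function.Injective ε ∧ ∀ j, ε j ≠ c}

/-- sum of the G-degrees of the connected components of `Γ_ĉ`: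
for each component, the sum over the 3 cyclic permutations ε (up to inversion) of
the genus ρ_ε given by 2 − 2ρ_ε = χ_ε. -/
noncomputable def omegaGhat (c : Fin 5) : ℚ :=
  ∑ᶠ C ∈ G.componentsOf {x | x ≠ c},
    (1 / 8) * ∑ᶠ ε : CyclAvoiding c, (2 - G.chiEps ε.val C) / 2

/-- the subdegree ρ_G(Γ) = |ℛ₄(Γ)| + 5p − |ℛ₂(Γ)|. -/
noncomputable def subdegree (p : ℕ) : ℤ :=
  (∑ c : Fin 5, (G.numResidues {x | x ≠ c} : ℤ)) + 5 * (p : ℤ)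
    - (∑ Δ ∈ Finset.univ.filter (fun Δ : Finset (Fin 5) => Δ.card = 2),
        (G.numResidues ↑Δ : ℤ))

end ColoredGraph


namespace ColoredGraph

instance (c : Fin 5) : DecidablePred (fun ε : ZMod 4 → Fin 5 => Function.Injective ε ∧ ∀ j, ε j ≠ c) :=
  fun _ => inferInstanceAs (Decidable (_ ∧ _))

instance (c : Fin 5) : Fintype (CyclAvoiding c) :=
  inferInstanceAs (Fintype {ε : ZMod 4 → Fin 5 // Function.Injective ε ∧ ∀ j, ε j ≠ c})

set_option maxHeartbeats 1000000 in
lemma card_cyclAvoiding (c : Fin 5) : Fintype.card (CyclAvoiding c) = 24 := by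
  fin_cases c <;> decide

set_option maxHeartbeats 4000000 in
lemma cnt_eq (c : Fin 5) : ∀ a b : Fin 5,
    (∑ ε : CyclAvoiding c, ∑ j : ZMod 4, if a = ε.val j ∧ b = ε.val (j + 1) then 1 else 0)
      = if a ≠ b ∧ a ≠ c ∧ b ≠ c then (8 : ℕ) else 0 := by
  fin_cases c <;> decide

lemma sum_eps (c : Fin 5) (g : Fin 5 → Fin 5 → ℚ) :
    (∑ ε : CyclAvoiding c, ∑ j : ZMod 4, g (ε.val j) (ε.val (j + 1)))
    = ∑ q : Fin 5 × Fin 5, (if q.1 ≠ q.2 ∧ q.1 ≠ c ∧ q.2 ≠ c then (8 : ℚ) else 0) * g q.1 q.2 := by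
  have hcnt : ∀ q : Fin 5 × Fin 5,
      (∑ p : CyclAvoiding c × ZMod 4,
        if q.1 = p.1.val p.2 ∧ q.2 = p.1.val (p.2 + 1) then (1 : ℚ) else 0)
      = if q.1 ≠ q.2 ∧ q.1 ≠ c ∧ q.2 ≠ c then (8 : ℚ) else 0 := by
    intro q
    have h := cnt_eq c q.1 q.2
    calc (∑ p : CyclAvoiding c × ZMod 4,
            if q.1 = p.1.val p.2 ∧ q.2 = p.1.val (p.2 + 1) then (1 : ℚ) else 0)
        = ((∑ ε : CyclAvoiding c, ∑ j : ZMod 4,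
            if q.1 = ε.val j ∧ q.2 = ε.val (j + 1) then 1 else 0 : ℕ) : ℚ) := by
          rw [Fintype.sum_prod_type]; push_cast; rfl
      _ = _ := by rw [h]; split <;> norm_num
  calc (∑ ε : CyclAvoiding c, ∑ j : ZMod 4, g (ε.val j) (ε.val (j + 1)))
      = ∑ p : CyclAvoiding c × ZMod 4, g (p.1.val p.2) (p.1.val (p.2 + 1)) := by
        rw [Fintype.sum_prod_type]
    _ = ∑ p : CyclAvoiding c × ZMod 4, ∑ q : Fin 5 × Fin 5,
          if q.1 = p.1.val p.2 ∧ q.2 = p.1.val (p.2 + 1) then g q.1 q.2 else 0 := by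
        refine Finset.sum_congr rfl fun p _ => ?_
        rw [Fintype.sum_prod_type]
        simp [ite_and, Finset.sum_ite_eq']
    _ = ∑ q : Fin 5 × Fin 5, ∑ p : CyclAvoiding c × ZMod 4,
          if q.1 = p.1.val p.2 ∧ q.2 = p.1.val (p.2 + 1) then g q.1 q.2 else 0 :=
        Finset.sum_comm
    _ = _ := by
        refine Finset.sum_congr rfl fun q _ => ?_
        rw [← hcnt q, Finset.sum_mul]
        refine Finset.sum_congr rfl fun p _ => ?_
        split <;> ring

variable {G : ColoredGraph 5}

lemma inner_eq (c : Fin 5) (C : Set G.V) :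
    (1 / 8 : ℚ) * ∑ᶠ ε : CyclAvoiding c, (2 - G.chiEps ε.val C) / 2
      = 3 + (3 / 2) * (C.ncard : ℚ)
        - (1 / 2) * ∑ q : Fin 5 × Fin 5,
            (if q.1 ≠ q.2 ∧ q.1 ≠ c ∧ q.2 ≠ c then (1 : ℚ) else 0) * (G.gIn q.1 q.2 C : ℚ) := by
  rw [finsum_eq_sum_of_fintype]
  have h1 : ∑ ε : CyclAvoiding c, (2 - G.chiEps ε.val C) / 2
      = ∑ ε : CyclAvoiding c, (1 + (C.ncard : ℚ) / 2
          - (∑ j : ZMod 4, (G.gIn (ε.val j) (ε.val (j + 1)) C : ℚ)) / 2) := by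
    refine Finset.sum_congr rfl fun ε _ => ?_
    unfold chiEps; ring
  rw [h1, Finset.sum_sub_distrib, Finset.sum_const, Finset.card_univ, card_cyclAvoiding,
    ← Finset.sum_div, sum_eps c (fun a b => (G.gIn a b C : ℚ))]
  have h8 : ∑ q : Fin 5 × Fin 5, (if q.1 ≠ q.2 ∧ q.1 ≠ c ∧ q.2 ≠ c then (8 : ℚ) else 0)
        * (G.gIn q.1 q.2 C : ℚ)
      = 8 * ∑ q : Fin 5 × Fin 5, (if q.1 ≠ q.2 ∧ q.1 ≠ c ∧ q.2 ≠ c then (1 : ℚ) else 0)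
        * (G.gIn q.1 q.2 C : ℚ) := by
    rw [Finset.mul_sum]
    refine Finset.sum_congr rfl fun q _ => ?_
    split <;> ring
  rw [h8, nsmul_eq_mul]
  ring

end ColoredGraph

namespace ColoredGraph

variable {G : ColoredGraph 5}

lemma reach_symm {Δ : Set (Fin 5)} {v w : G.V} (h : G.Reach Δ v w) : G.Reach Δ w v :=
  Relation.EqvGen.symm _ _ h

lemma reach_trans {Δ : Set (Fin 5)} {u v w : G.V} (h : G.Reach Δ u v) (h' : G.Reach Δ v w) :
    G.Reach Δ u w := Relation.EqvGen.trans _ _ _ h h'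

lemma reach_mono {Δ Δ' : Set (Fin 5)} (h : Δ ⊆ Δ') {v w : G.V} (hr : G.Reach Δ v w) :
    G.Reach Δ' v w :=
  Relation.EqvGen.mono (fun _ _ ⟨e, he, ha, hb⟩ => ⟨e, h he, ha, hb⟩) _ _ hr

lemma mem_residue_self (Δ : Set (Fin 5)) (v : G.V) : v ∈ G.residue Δ v :=
  Relation.EqvGen.refl v

lemma residue_eq_of_reach {Δ : Set (Fin 5)} {v w : G.V} (h : G.Reach Δ v w) :
    G.residue Δ v = G.residue Δ w := by
  ext u
  exact ⟨fun hu => reach_trans (reach_symm h) hu, fun hu => reach_trans h hu⟩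

def comp (G : ColoredGraph 5) (Δ : Set (Fin 5)) : Quotient (G.residueSetoid Δ) → Set G.V :=
  Quotient.lift (G.residue Δ) (fun _ _ h => residue_eq_of_reach h)

lemma comp_mk (Δ : Set (Fin 5)) (v : G.V) :
    G.comp Δ (Quotient.mk (G.residueSetoid Δ) v) = G.residue Δ v := rfl

lemma comp_injective (Δ : Set (Fin 5)) : Function.Injective (G.comp Δ) := by
  intro x y
  induction x using Quotient.ind
  induction y using Quotient.ind
  rename_i v w
  intro h
  refine Quotient.sound ?_
  have : w ∈ G.residue Δ v := by
    rw [show G.comp Δ (Quotient.mk (G.residueSetoid Δ) v) = G.residue Δ v from rfl] at h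
    rw [h]
    exact mem_residue_self Δ w
  exact this

lemma range_comp (Δ : Set (Fin 5)) : Set.range (G.comp Δ) = G.componentsOf Δ := by
  ext C
  constructor
  · rintro ⟨x, rfl⟩
    induction x using Quotient.ind
    rename_i v
    exact ⟨v, rfl⟩
  · rintro ⟨v, rfl⟩
    exact ⟨Quotient.mk (G.residueSetoid Δ) v, rfl⟩

lemma fiber_sum {α β : Type} [Finite α] [Fintype β] (f : α → β) :
    ∑ b : β, Nat.card {a : α // f a = b} = Nat.card α := by
  classical
  letI := Fintype.ofFinite α
  have h1 : Nat.card α = Fintype.card ((b : β) × {a : α // f a = b}) := by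
    rw [Nat.card_eq_fintype_card]
    exact (Fintype.card_congr (Equiv.sigmaFiberEquiv f)).symm
  rw [h1, Fintype.card_sigma]
  exact Finset.sum_congr rfl fun b _ => Nat.card_eq_fintype_card

lemma residue_eq_fiber (Δ : Set (Fin 5)) (v : G.V) :
    G.residue Δ v = {u : G.V | Quotient.mk (G.residueSetoid Δ) u = Quotient.mk (G.residueSetoid Δ) v} := by
  ext u
  constructor
  · intro hu
    exact Quotient.sound (reach_symm hu)
  · intro hu
    exact reach_symm (Quotient.exact hu)

lemma sum_ncard (Δ : Set (Fin 5)) [Fintype (Quotient (G.residueSetoid Δ))] :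
    ∑ x : Quotient (G.residueSetoid Δ), (G.comp Δ x).ncard = Fintype.card G.V := by
  have h : ∀ x : Quotient (G.residueSetoid Δ),
      (G.comp Δ x).ncard = Nat.card {u : G.V // Quotient.mk (G.residueSetoid Δ) u = x} := by
    intro x
    induction x using Quotient.ind
    rename_i v
    rw [comp_mk, residue_eq_fiber, ← Nat.card_coe_set_eq]
    exact Nat.card_congr (Equiv.subtypeEquivRight fun _ => Iff.rfl)
  rw [Finset.sum_congr rfl fun x _ => h x, fiber_sum, Nat.card_eq_fintype_card]

def qmap (G : ColoredGraph 5) {Δ Δ' : Set (Fin 5)} (h : Δ ⊆ Δ') :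
    Quotient (G.residueSetoid Δ) → Quotient (G.residueSetoid Δ') :=
  Quotient.lift (fun v => Quotient.mk (G.residueSetoid Δ') v)
    (fun _ _ hab => Quotient.sound (reach_mono h hab))

lemma gIn_comp {Δ' : Set (Fin 5)} {i j : Fin 5} (hsub : ({i, j} : Set (Fin 5)) ⊆ Δ')
    (x : Quotient (G.residueSetoid Δ')) :
    G.gIn i j (G.comp Δ' x)
      = Nat.card {y : Quotient (G.residueSetoid {i, j}) // G.qmap hsub y = x} := by
  induction x using Quotient.ind
  rename_i v
  have hset : {C' : Set G.V | ∃ w ∈ G.residue Δ' v, C' = G.residue {i, j} w}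
      = (G.comp {i, j}) '' {y | G.qmap hsub y = Quotient.mk (G.residueSetoid Δ') v} := by
    ext C'
    constructor
    · rintro ⟨w, hw, rfl⟩
      exact ⟨Quotient.mk (G.residueSetoid {i, j}) w, Quotient.sound (reach_symm hw), rfl⟩
    · rintro ⟨y, hy, rfl⟩
      induction y using Quotient.ind
      rename_i w
      refine ⟨w, ?_, rfl⟩
      exact reach_symm (Quotient.exact hy)
  show ({C' : Set G.V | ∃ w ∈ G.residue Δ' v, C' = G.residue {i, j} w}).ncard = _
  rw [hset, Set.ncard_image_of_injective _ (comp_injective {i, j}), ← Nat.card_coe_set_eq]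
  exact Nat.card_congr (Equiv.subtypeEquivRight fun _ => Iff.rfl)

lemma sum_gIn {Δ' : Set (Fin 5)} {i j : Fin 5} (hsub : ({i, j} : Set (Fin 5)) ⊆ Δ')
    [Fintype (Quotient (G.residueSetoid Δ'))] :
    ∑ x : Quotient (G.residueSetoid Δ'), G.gIn i j (G.comp Δ' x)
      = G.numResidues {i, j} := by
  rw [Finset.sum_congr rfl fun x _ => gIn_comp hsub x, fiber_sum]
  rfl

end ColoredGraph

namespace ColoredGraph

variable {G : ColoredGraph 5}

lemma omegaGhat_eq (c : Fin 5) :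
    G.omegaGhat c = 3 * (G.numResidues {x | x ≠ c} : ℚ)
      + (3 / 2) * (Fintype.card G.V : ℚ)
      - (1 / 2) * ∑ q : Fin 5 × Fin 5,
          (if q.1 ≠ q.2 ∧ q.1 ≠ c ∧ q.2 ≠ c then (1 : ℚ) else 0)
            * (G.numResidues {q.1, q.2} : ℚ) := by
  classical
  unfold omegaGhat
  rw [finsum_mem_congr rfl fun C _ => inner_eq c C]
  rw [← range_comp, finsum_mem_range (comp_injective _)]
  letI : Fintype (Quotient (G.residueSetoid {x | x ≠ c})) := Fintype.ofFinite _
  rw [finsum_eq_sum_of_fintype]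
  rw [Finset.sum_sub_distrib, Finset.sum_add_distrib, Finset.sum_const, Finset.card_univ]
  have hN : Fintype.card (Quotient (G.residueSetoid {x | x ≠ c}))
      = G.numResidues {x | x ≠ c} := (Nat.card_eq_fintype_card).symm
  have h2 : ∑ x : Quotient (G.residueSetoid {x | x ≠ c}),
        (3 / 2) * ((G.comp {x | x ≠ c} x).ncard : ℚ)
      = (3 / 2) * (Fintype.card G.V : ℚ) := by
    rw [← Finset.mul_sum, ← Nat.cast_sum, sum_ncard]
  have h3 : ∑ x : Quotient (G.residueSetoid {x | x ≠ c}),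
        (1 / 2) * ∑ q : Fin 5 × Fin 5,
          (if q.1 ≠ q.2 ∧ q.1 ≠ c ∧ q.2 ≠ c then (1 : ℚ) else 0)
            * (G.gIn q.1 q.2 (G.comp {x | x ≠ c} x) : ℚ)
      = (1 / 2) * ∑ q : Fin 5 × Fin 5,
          (if q.1 ≠ q.2 ∧ q.1 ≠ c ∧ q.2 ≠ c then (1 : ℚ) else 0)
            * (G.numResidues {q.1, q.2} : ℚ) := by
    rw [← Finset.mul_sum, Finset.sum_comm]
    congr 1
    refine Finset.sum_congr rfl fun q _ => ?_
    by_cases h : q.1 ≠ q.2 ∧ q.1 ≠ c ∧ q.2 ≠ c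
    · have hsub : ({q.1, q.2} : Set (Fin 5)) ⊆ {x | x ≠ c} := by
        intro y hy
        rcases hy with rfl | hy
        · exact h.2.1
        · rw [Set.mem_singleton_iff] at hy; subst hy; exact h.2.2
      rw [← Finset.mul_sum, ← Nat.cast_sum, sum_gIn hsub]
    · simp [h]
  rw [h2, h3, hN, nsmul_eq_mul]
  ring

end ColoredGraph

namespace ColoredGraph

variable {G : ColoredGraph 5}

lemma pc (a b : Fin 5) : G.numResidues {a, b} = G.numResidues {b, a} := by
  rw [Set.pair_comm]

set_option maxHeartbeats 1000000 in
lemma pair_count :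
    (∑ c : Fin 5, ∑ q : Fin 5 × Fin 5,
        (if q.1 ≠ q.2 ∧ q.1 ≠ c ∧ q.2 ≠ c then (1 : ℚ) else 0)
          * (G.numResidues {q.1, q.2} : ℚ))
      = 6 * ∑ Δ ∈ Finset.univ.filter (fun Δ : Finset (Fin 5) => Δ.card = 2),
          (G.numResidues ↑Δ : ℚ) := by
  have hfil : (Finset.univ.filter fun Δ : Finset (Fin 5) => Δ.card = 2)
      = ({{0,1},{0,2},{0,3},{0,4},{1,2},{1,3},{1,4},{2,3},{2,4},{3,4}} :
          Finset (Finset (Fin 5))) := by decide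
  rw [hfil]
  repeat rw [Finset.sum_insert (by decide)]
  rw [Finset.sum_singleton]
  simp only [Fintype.sum_prod_type, Fin.sum_univ_five]
  simp (config := { decide := true }) only [if_true, if_false]
  simp only [Finset.coe_insert, Finset.coe_singleton]
  rw [pc 1 0, pc 2 0, pc 3 0, pc 4 0, pc 2 1, pc 3 1, pc 4 1, pc 3 2, pc 4 2, pc 4 3]
  ring

end ColoredGraph

/-- for a 5-colored graph Γ of order 2p,
Σ_c ω_G(Γ_ĉ) = 3·ρ_G(Γ), where ρ_G(Γ) = |ℛ₄(Γ)| + 5p − |ℛ₂(Γ)|. -/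
theorem sum_of_Gdegrees_eq_three_subdegree (G : ColoredGraph 5) (p : ℕ)
    (hp : Fintype.card G.V = 2 * p) :
    (∑ c : Fin 5, G.omegaGhat c) = 3 * (G.subdegree p : ℚ) := by
  rw [Finset.sum_congr rfl fun c _ => ColoredGraph.omegaGhat_eq c]
  rw [Finset.sum_sub_distrib, Finset.sum_add_distrib, ← Finset.mul_sum,
    ← Finset.mul_sum, ← Finset.mul_sum, ColoredGraph.pair_count, Finset.sum_const,
    Finset.card_univ]
  unfold ColoredGraph.subdegree
  rw [hp]
  push_cast
  simp only [Fintype.card_fin, nsmul_eq_mul]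
  ring
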